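/- For every ε > 0 there exists a measurable function u : (0,1) × (0,1) → [0,∞) (namely u(t,x) = e^{t/ε} · 1_{[0, e^{−t/ε}]}(x)) such that ‖u(t,·)‖_{L^{1,∞}((0,1))} = 1 for every t ∈ (0,1), hence ‖u‖_{L^{1,∞}_t L^{1,∞}_x} = 1, while the joint weak norm satisfies ‖u‖_{L^{1,∞}((0,1)×(0,1))} ≤ ε. -/

import Mathlib

open MeasureTheory ENNReal

lemma iSup_aux (M r : ℝ) (hM : 0 < M) (hr : 0 < r) (hMr : M * r = 1) :
    (⨆ (l : ℝ) (_ : 0 < l), ENNReal.ofReal l * (if l < M then ENNReal.ofReal r else 0)) = 1 := by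
  apply le_antisymm
  · refine iSup₂_le fun l hl => ?_
    split_ifs with h
    · rw [← ENNReal.ofReal_mul hl.le]
      exact ENNReal.ofReal_le_one.2 (by nlinarith)
    · simp
  · refine le_of_forall_lt fun c hc => ?_
    have hcT : c ≠ ⊤ := (hc.trans_le le_top).ne
    have hct : c.toReal < 1 := by
      rwa [← ENNReal.ofReal_one, ENNReal.lt_ofReal_iff_toReal_lt hcT] at hc
    set d : ℝ := (c.toReal + 1) / 2 with hd
    have hct0 : 0 ≤ c.toReal := ENNReal.toReal_nonneg
    have hd0 : 0 < d := by positivity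
    have hd1 : d < 1 := by simp only [hd]; linarith
    have hcd : c < ENNReal.ofReal d := by
      rw [ENNReal.lt_ofReal_iff_toReal_lt hcT]; simp only [hd]; linarith
    have hterm : ENNReal.ofReal (d * M) * (if d * M < M then ENNReal.ofReal r else 0)
        = ENNReal.ofReal d := by
      rw [if_pos (by nlinarith), ← ENNReal.ofReal_mul (by positivity)]
      congr 1
      rw [mul_assoc, hMr, mul_one]
    calc c < ENNReal.ofReal d := hcd
    _ = _ := hterm.symm
    _ ≤ _ := le_iSup₂ (f := fun l (_ : 0 < l) =>
        ENNReal.ofReal l * (if l < M then ENNReal.ofReal r else 0)) (d * M) (by positivity)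

lemma integral_aux (ε a : ℝ) (hε : 0 < ε) :
    ∫ t in Set.Ioi a, Real.exp (-(t/ε)) = ε * Real.exp (-(a/ε)) := by
  have hderiv : ∀ x ∈ Set.Ioi a, HasDerivAt (fun t => -ε * Real.exp (-(t/ε)))
      (Real.exp (-(x/ε))) x := by
    intro x _
    have h1 : HasDerivAt (fun t : ℝ => -(t/ε)) (-(1/ε)) x := by
      simpa [Pi.neg_def] using ((hasDerivAt_id x).div_const ε).neg
    have h2 := (Real.hasDerivAt_exp (-(x/ε))).comp x h1
    have h3 := h2.const_mul (-ε)
    convert h3 using 1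
    · rfl
    · rfl
    · rfl
    field_simp
  have hint : IntegrableOn (fun t => Real.exp (-(t/ε))) (Set.Ioi a) := by
    have := exp_neg_integrableOn_Ioi a (b := 1/ε) (by positivity)
    refine this.congr_fun (fun x _ => by ring_nf) measurableSet_Ioi
  have hlim : Filter.Tendsto (fun t => -ε * Real.exp (-(t/ε))) Filter.atTop (nhds 0) := by
    have h1 : Filter.Tendsto (fun t : ℝ => -(t/ε)) Filter.atTop Filter.atBot :=
      Filter.tendsto_neg_atTop_atBot.comp (Filter.tendsto_id.atTop_div_const hε)
    have h2 := Real.tendsto_exp_atBot.comp h1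
    have := h2.const_mul (-ε)
    simpa using this
  have hcont : ContinuousOn (fun t => -ε * Real.exp (-(t/ε))) (Set.Ici a) := by
    fun_prop
  have := integral_Ioi_of_hasDerivAt_of_tendsto (hcont a Set.self_mem_Ici) hderiv hint hlim
  rw [this]; ring

lemma vol_aux (ε a : ℝ) (hε : 0 < ε) :
    volume {z : ℝ × ℝ | a < z.1 ∧ z.2 ∈ Set.Ioc 0 (Real.exp (-(z.1/ε)))}
      = ENNReal.ofReal (ε * Real.exp (-(a/ε))) := by
  have hmeas : MeasurableSet {z : ℝ × ℝ | a < z.1 ∧ z.2 ∈ Set.Ioc 0 (Real.exp (-(z.1/ε)))} := by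
    apply MeasurableSet.inter
    · exact measurableSet_lt measurable_const measurable_fst
    · apply MeasurableSet.inter
      · exact measurableSet_lt measurable_const measurable_snd
      · exact measurableSet_le measurable_snd (by fun_prop)
  rw [MeasureTheory.Measure.volume_eq_prod, Measure.prod_apply hmeas]
  have hpre : ∀ t : ℝ, (Prod.mk t ⁻¹' {z : ℝ × ℝ | a < z.1 ∧ z.2 ∈ Set.Ioc 0 (Real.exp (-(z.1/ε)))})
      = if a < t then Set.Ioc 0 (Real.exp (-(t/ε))) else ∅ := by
    intro t
    ext x
    by_cases h : a < t <;> simp [h, Set.mem_Ioc]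
  have hv : ∀ t : ℝ, volume (Prod.mk t ⁻¹' {z : ℝ × ℝ | a < z.1 ∧ z.2 ∈ Set.Ioc 0 (Real.exp (-(z.1/ε)))})
      = (Set.Ioi a).indicator (fun t => ENNReal.ofReal (Real.exp (-(t/ε)))) t := by
    intro t
    rw [hpre t]
    by_cases h : a < t
    · rw [if_pos h]
      simp [Set.indicator, h, Real.volume_Ioc, sub_zero]
    · rw [if_neg h]
      simp [Set.indicator, h]
  simp_rw [hv]
  rw [lintegral_indicator measurableSet_Ioi]
  rw [← MeasureTheory.ofReal_integral_eq_lintegral_ofReal]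
  · rw [integral_aux ε a hε]
  · have := exp_neg_integrableOn_Ioi a (b := 1/ε) (by positivity)
    refine this.congr_fun (fun x _ => by ring_nf) measurableSet_Ioi
  · filter_upwards with x using (Real.exp_pos _).le

theorem stmt13 (ε : ℝ) (hε : 0 < ε) :
    ∃ u : ℝ → ℝ → ℝ≥0∞,
      u = (fun t x => (Set.Icc (0 : ℝ) (Real.exp (-(t / ε)))).indicator
            (fun _ => ENNReal.ofReal (Real.exp (t / ε))) x) ∧
      Measurable (Function.uncurry u) ∧
      (∀ t ∈ Set.Ioo (0 : ℝ) 1,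
        (⨆ (l : ℝ) (_ : 0 < l), ENNReal.ofReal l *
          volume {x ∈ Set.Ioo (0 : ℝ) 1 | ENNReal.ofReal l < u t x}) = 1) ∧
      (⨆ (b : ℝ) (_ : 0 < b), ENNReal.ofReal b *
        volume {t ∈ Set.Ioo (0 : ℝ) 1 |
          ENNReal.ofReal b <
            ⨆ (l : ℝ) (_ : 0 < l), ENNReal.ofReal l *
              volume {x ∈ Set.Ioo (0 : ℝ) 1 | ENNReal.ofReal l < u t x}}) = 1 ∧
      (⨆ (l : ℝ) (_ : 0 < l), ENNReal.ofReal l *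
        volume {z : ℝ × ℝ | z ∈ Set.Ioo (0 : ℝ) 1 ×ˢ Set.Ioo (0 : ℝ) 1 ∧
          ENNReal.ofReal l < u z.1 z.2}) ≤ ENNReal.ofReal ε := by
  set u : ℝ → ℝ → ℝ≥0∞ := fun t x => (Set.Icc (0 : ℝ) (Real.exp (-(t / ε)))).indicator
      (fun _ => ENNReal.ofReal (Real.exp (t / ε))) x with hu
  -- the volume of the one-dimensional slice set
  have hvolx : ∀ t ∈ Set.Ioo (0:ℝ) 1, ∀ l : ℝ, 0 < l →
      volume {x ∈ Set.Ioo (0 : ℝ) 1 | ENNReal.ofReal l < u t x}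
        = if l < Real.exp (t/ε) then ENNReal.ofReal (Real.exp (-(t/ε))) else 0 := by
    intro t ht l hl
    have hr1 : Real.exp (-(t/ε)) < 1 := by
      rw [Real.exp_lt_one_iff]
      have : 0 < t / ε := div_pos ht.1 hε
      linarith
    have hset : {x ∈ Set.Ioo (0 : ℝ) 1 | ENNReal.ofReal l < u t x}
        = if l < Real.exp (t/ε) then Set.Ioc 0 (Real.exp (-(t/ε))) else ∅ := by
      ext x
      simp only [hu, Set.mem_setOf_eq, Set.mem_Ioo, Set.indicator_apply, Set.mem_Icc]
      by_cases h : l < Real.exp (t/ε)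
      · rw [if_pos h]
        simp only [Set.mem_Ioc]
        constructor
        · rintro ⟨⟨hx0, hx1⟩, hlt⟩
          by_cases hx : 0 ≤ x ∧ x ≤ Real.exp (-(t/ε))
          · exact ⟨hx0, hx.2⟩
          · rw [if_neg hx] at hlt
            exact absurd hlt (by simp)
        · rintro ⟨hx0, hxr⟩
          refine ⟨⟨hx0, lt_of_le_of_lt hxr hr1⟩, ?_⟩
          rw [if_pos ⟨hx0.le, hxr⟩]
          exact (ENNReal.ofReal_lt_ofReal_iff (Real.exp_pos _)).2 h
      · rw [if_neg h]
        simp only [Set.mem_empty_iff_false, iff_false, not_and]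
        rintro - hlt
        by_cases hx : 0 ≤ x ∧ x ≤ Real.exp (-(t/ε))
        · rw [if_pos hx] at hlt
          exact h ((ENNReal.ofReal_lt_ofReal_iff (Real.exp_pos _)).1 hlt)
        · rw [if_neg hx] at hlt
          exact absurd hlt (by simp)
    rw [hset]
    split_ifs with h
    · rw [Real.volume_Ioc, sub_zero]
    · simp
  -- claim A : inner sup is 1
  have hA : ∀ t ∈ Set.Ioo (0:ℝ) 1,
      (⨆ (l : ℝ) (_ : 0 < l), ENNReal.ofReal l *
        volume {x ∈ Set.Ioo (0 : ℝ) 1 | ENNReal.ofReal l < u t x}) = 1 := by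
    intro t ht
    have hcong : ∀ l : ℝ, (⨆ (_ : 0 < l), ENNReal.ofReal l *
        volume {x ∈ Set.Ioo (0 : ℝ) 1 | ENNReal.ofReal l < u t x})
        = ⨆ (_ : 0 < l), ENNReal.ofReal l *
          (if l < Real.exp (t/ε) then ENNReal.ofReal (Real.exp (-(t/ε))) else 0) := by
      intro l
      by_cases hl : 0 < l
      · simp only [hl, iSup_pos, hvolx t ht l hl]
      · simp [hl]
    rw [iSup_congr hcong]
    exact iSup_aux _ _ (Real.exp_pos _) (Real.exp_pos _)
      (by rw [← Real.exp_add]; simp)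
  refine ⟨u, rfl, ?_, hA, ?_, ?_⟩
  · -- measurability
    have : Function.uncurry u = fun p : ℝ × ℝ =>
        if 0 ≤ p.2 ∧ p.2 ≤ Real.exp (-(p.1/ε)) then ENNReal.ofReal (Real.exp (p.1/ε)) else 0 := by
      funext p
      simp [hu, Function.uncurry, Set.indicator_apply, Set.mem_Icc]
    rw [this]
    refine Measurable.ite ?_ (by fun_prop) measurable_const
    exact (measurableSet_le measurable_const measurable_snd).inter
      (measurableSet_le measurable_snd (by fun_prop))
  · -- claim B
    have hsetB : ∀ b : ℝ, 0 < b →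
        {t ∈ Set.Ioo (0:ℝ) 1 | ENNReal.ofReal b <
          ⨆ (l : ℝ) (_ : 0 < l), ENNReal.ofReal l *
            volume {x ∈ Set.Ioo (0 : ℝ) 1 | ENNReal.ofReal l < u t x}}
          = if b < 1 then Set.Ioo (0:ℝ) 1 else ∅ := by
      intro b hb
      ext t
      by_cases h : b < 1
      · rw [if_pos h]
        simp only [Set.mem_setOf_eq]
        constructor
        · exact fun ht => ht.1
        · intro ht
          refine ⟨ht, ?_⟩
          rw [hA t ht, ← ENNReal.ofReal_one]
          exact (ENNReal.ofReal_lt_ofReal_iff one_pos).2 h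
      · rw [if_neg h]
        simp only [Set.mem_empty_iff_false, iff_false, Set.mem_setOf_eq, not_and]
        intro ht hlt
        rw [hA t ht, ← ENNReal.ofReal_one] at hlt
        exact h ((ENNReal.ofReal_lt_ofReal_iff one_pos).1 hlt)
    have hcong : ∀ b : ℝ, (⨆ (_ : 0 < b), ENNReal.ofReal b *
        volume {t ∈ Set.Ioo (0:ℝ) 1 | ENNReal.ofReal b <
          ⨆ (l : ℝ) (_ : 0 < l), ENNReal.ofReal l *
            volume {x ∈ Set.Ioo (0 : ℝ) 1 | ENNReal.ofReal l < u t x}})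
        = ⨆ (_ : 0 < b), ENNReal.ofReal b * (if b < 1 then ENNReal.ofReal 1 else 0) := by
      intro b
      by_cases hb : 0 < b
      · simp only [hb, iSup_pos, hsetB b hb]
        split_ifs with h
        · rw [Real.volume_Ioo, sub_zero]
        · simp
      · simp [hb]
    rw [iSup_congr hcong]
    exact iSup_aux 1 1 one_pos one_pos (one_mul 1)
  · -- claim C
    refine iSup₂_le fun l hl => ?_
    set a : ℝ := max 0 (ε * Real.log l) with ha
    have hsub : {z : ℝ × ℝ | z ∈ Set.Ioo (0 : ℝ) 1 ×ˢ Set.Ioo (0 : ℝ) 1 ∧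
        ENNReal.ofReal l < u z.1 z.2}
        ⊆ {z : ℝ × ℝ | a < z.1 ∧ z.2 ∈ Set.Ioc 0 (Real.exp (-(z.1/ε)))} := by
      rintro ⟨t, x⟩ ⟨hz, hlt⟩
      simp only [Set.mem_prod, Set.mem_Ioo] at hz
      simp only [hu, Set.indicator_apply, Set.mem_Icc] at hlt
      by_cases hx : 0 ≤ x ∧ x ≤ Real.exp (-(t/ε))
      · rw [if_pos hx] at hlt
        have hlM : l < Real.exp (t/ε) :=
          (ENNReal.ofReal_lt_ofReal_iff (Real.exp_pos _)).1 hlt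
        have h1 : Real.log l < t / ε := (Real.log_lt_iff_lt_exp hl).2 hlM
        have h2 : ε * Real.log l < t := by
          rw [mul_comm]
          exact (lt_div_iff₀ hε).1 h1
        exact ⟨max_lt hz.1.1 h2, hz.2.1, hx.2⟩
      · rw [if_neg hx] at hlt
        exact absurd hlt (by simp)
    have hbound : l * Real.exp (-(a/ε)) ≤ 1 := by
      by_cases hl1 : l ≤ 1
      · have : a = 0 := by
          rw [ha, max_eq_left]
          exact mul_nonpos_of_nonneg_of_nonpos hε.le (Real.log_nonpos hl.le hl1)
        rw [this]
        simp only [zero_div, neg_zero, Real.exp_zero, mul_one]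
        exact hl1
      · push_neg at hl1
        have hlog : 0 < Real.log l := Real.log_pos hl1
        have hla : a = ε * Real.log l := by
          rw [ha, max_eq_right (by positivity)]
        rw [hla]
        have he : ε * Real.log l / ε = Real.log l := by field_simp
        rw [he, Real.exp_neg, Real.exp_log hl, mul_inv_cancel₀ hl.ne']
    calc ENNReal.ofReal l * volume {z : ℝ × ℝ | z ∈ Set.Ioo (0 : ℝ) 1 ×ˢ Set.Ioo (0 : ℝ) 1 ∧
          ENNReal.ofReal l < u z.1 z.2}
        ≤ ENNReal.ofReal l * volume {z : ℝ × ℝ | a < z.1 ∧ z.2 ∈ Set.Ioc 0 (Real.exp (-(z.1/ε)))} :=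
          mul_le_mul_right (measure_mono hsub) _
      _ = ENNReal.ofReal l * ENNReal.ofReal (ε * Real.exp (-(a/ε))) := by rw [vol_aux ε a hε]
      _ = ENNReal.ofReal (ε * (l * Real.exp (-(a/ε)))) := by
          rw [← ENNReal.ofReal_mul hl.le]; ring_nf
      _ ≤ ENNReal.ofReal ε := by
          apply ENNReal.ofReal_le_ofReal
          nlinarith [Real.exp_pos (-(a/ε))]
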